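/- Let ζ>0 and let ρ be a finite Borel measure supported on [0,1] with ρ({0})=0 and ρ((0,λ]) ≤ λ^ζ for all λ ∈ [0,1]. Define the Steepest Descent iterates q_0 = 1, α_n = (∫ λ q_n(λ)² ρ(dλ)) / (∫ λ² q_n(λ)² ρ(dλ)), q_{n+1}(λ) = (1-α_nλ)q_n(λ), L_n = (1/2)∫ q_n(λ)² ρ(dλ), and assume ∫ λ² q_n(λ)² ρ(dλ) > 0 for every n. Then for every s with -ζ < s < 0 and every n ≥ 0, L_n ≤ ( L_0^{1/s} + (1/|s|)·(ζ/(2(s+ζ)))^{1/s}·n )^s. -/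

import Mathlib

open MeasureTheory Filter Set

lemma aux_bernoulli {τ u : ℝ} (hτ : 0 < τ) (hu0 : 0 ≤ u) (hu1 : u < 1) :
    1 + u/τ ≤ (1-u) ^ (-(1/τ) : ℝ) := by
  have h1u : (0:ℝ) < 1 - u := by linarith
  have ha : (0:ℝ) < 1 + u/τ := by positivity
  -- key : (1+u/τ)^τ * (1-u) ≤ 1
  have hexp1 : (1 + u/τ) ^ (τ:ℝ) ≤ Real.exp u := by
    rw [Real.rpow_def_of_pos ha]
    apply Real.exp_le_exp.2
    have hlog : Real.log (1 + u/τ) ≤ u/τ := by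
      have := Real.log_le_sub_one_of_pos ha
      linarith
    calc Real.log (1 + u/τ) * τ ≤ (u/τ) * τ := by
          apply mul_le_mul_of_nonneg_right hlog hτ.le
      _ = u := by field_simp
  have hexp2 : 1 - u ≤ Real.exp (-u) := by
    have := Real.add_one_le_exp (-u)
    linarith
  have hkey : (1 + u/τ) ^ (τ:ℝ) * (1 - u) ≤ 1 := by
    calc (1 + u/τ) ^ (τ:ℝ) * (1-u) ≤ Real.exp u * Real.exp (-u) := by
          apply mul_le_mul hexp1 hexp2 h1u.le (Real.exp_nonneg u)
      _ = 1 := by rw [← Real.exp_add]; simp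
  -- so (1+u/τ)^τ ≤ (1-u)⁻¹
  have h2 : (1 + u/τ) ^ (τ:ℝ) ≤ (1-u)⁻¹ := by
    rw [inv_eq_one_div, le_div_iff₀ h1u]
    exact hkey
  -- raise to 1/τ
  have h3 : ((1 + u/τ) ^ (τ:ℝ)) ^ (1/τ : ℝ) ≤ ((1-u)⁻¹) ^ (1/τ : ℝ) :=
    Real.rpow_le_rpow (by positivity) h2 (by positivity)
  rwa [← Real.rpow_mul ha.le, mul_one_div, div_self hτ.ne', Real.rpow_one,
    ← Real.rpow_neg_one (1-u), ← Real.rpow_mul h1u.le, neg_one_mul] at h3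

lemma aux_negmoment (ζ τ : ℝ) (hζ : 0 < ζ) (hτ : 0 < τ) (hτζ : τ < ζ)
    (ρ : Measure ℝ) [IsFiniteMeasure ρ]
    (hsupp : ρ (Set.Icc (0:ℝ) 1)ᶜ = 0) (h0 : ρ {(0:ℝ)} = 0)
    (hpow : ∀ l ∈ Set.Icc (0:ℝ) 1, (ρ (Set.Ioc 0 l)).toReal ≤ l ^ ζ) :
    ∫⁻ l, ENNReal.ofReal ((Set.Ioc (0:ℝ) 1).indicator (fun l => l ^ (-τ)) l) ∂ρ
      ≤ ENNReal.ofReal (ζ/(ζ-τ)) := by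
  set φ : ℝ → ℝ := (Set.Ioc (0:ℝ) 1).indicator (fun l => l ^ (-τ)) with hφ
  have hφ_eq : φ = (Set.Ioc (0:ℝ) 1).indicator (fun l => Real.exp (Real.log l * (-τ))) := by
    funext l
    by_cases hl : l ∈ Set.Ioc (0:ℝ) 1
    · rw [hφ, indicator_of_mem hl, indicator_of_mem hl, Real.rpow_def_of_pos hl.1]
    · rw [hφ, indicator_of_notMem hl, indicator_of_notMem hl]
  have hφ_meas : Measurable φ := by
    rw [hφ_eq]
    exact ((Real.measurable_log.mul_const _).exp).indicator measurableSet_Ioc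
  have hφ_nn : ∀ l, 0 ≤ φ l := by
    intro l
    by_cases hl : l ∈ Set.Ioc (0:ℝ) 1
    · rw [hφ, indicator_of_mem hl]; exact Real.rpow_nonneg hl.1.le _
    · rw [hφ, indicator_of_notMem hl]
  have hIoc : ∀ x ∈ Set.Icc (0:ℝ) 1, ρ (Set.Ioc 0 x) ≤ ENNReal.ofReal (x ^ ζ) := by
    intro x hx
    rw [← ENNReal.ofReal_toReal (measure_ne_top ρ _)]
    exact ENNReal.ofReal_le_ofReal (hpow x hx)
  -- layer cake
  rw [lintegral_eq_lintegral_meas_lt ρ (ae_of_all _ hφ_nn) hφ_meas.aemeasurable]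
  have hbd : ∀ t : ℝ, 0 < t →
      ρ {a : ℝ | t < φ a} ≤ ENNReal.ofReal ((min 1 (t ^ (-τ⁻¹))) ^ ζ) := by
    intro t ht
    have hsub : {a : ℝ | t < φ a} ⊆ Set.Ioc 0 (min 1 (t ^ (-τ⁻¹))) := by
      intro a ha
      simp only [mem_setOf_eq] at ha
      by_cases hmem : a ∈ Set.Ioc (0:ℝ) 1
      · rw [hφ, indicator_of_mem hmem] at ha
        refine ⟨hmem.1, le_min hmem.2 ?_⟩
        have h1 : (a ^ (-τ:ℝ)) ^ (-τ⁻¹:ℝ) ≤ t ^ (-τ⁻¹:ℝ) :=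
          Real.rpow_le_rpow_of_nonpos ht ha.le (by positivity |> fun h => neg_nonpos.2 h)
        rwa [← Real.rpow_mul hmem.1.le, neg_mul_neg, mul_inv_cancel₀ hτ.ne',
          Real.rpow_one] at h1
      · rw [hφ, indicator_of_notMem hmem] at ha; linarith
    calc ρ {a : ℝ | t < φ a} ≤ ρ (Set.Ioc 0 (min 1 (t ^ (-τ⁻¹)))) := measure_mono hsub
      _ ≤ ENNReal.ofReal ((min 1 (t ^ (-τ⁻¹))) ^ ζ) := by
          apply hIoc
          exact ⟨le_min zero_le_one (Real.rpow_nonneg ht.le _), min_le_left _ _⟩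
  rw [← Set.Ioc_union_Ioi_eq_Ioi (zero_le_one (α := ℝ)),
    lintegral_union measurableSet_Ioi (Set.Ioc_disjoint_Ioi le_rfl)]
  have h1 : ∫⁻ t in Set.Ioc (0:ℝ) 1, ρ {a : ℝ | t < φ a} ≤ 1 := by
    have hρu : ρ Set.univ ≤ 1 := by
      have : ρ Set.univ ≤ ρ (Set.Icc (0:ℝ) 1) + ρ (Set.Icc (0:ℝ) 1)ᶜ := by
        rw [← Set.union_compl_self (Set.Icc (0:ℝ) 1)]
        exact measure_union_le _ _
      rw [hsupp, add_zero] at this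
      refine this.trans ?_
      have h2 : ρ (Set.Icc (0:ℝ) 1) ≤ ρ {(0:ℝ)} + ρ (Set.Ioc 0 1) := by
        refine le_trans (measure_mono ?_) (measure_union_le _ _)
        intro x hx
        rcases eq_or_lt_of_le hx.1 with h | h
        · exact Or.inl (by simp [← h])
        · exact Or.inr ⟨h, hx.2⟩
      refine h2.trans ?_
      have := hIoc 1 ⟨zero_le_one, le_rfl⟩
      simp only [Real.one_rpow, ENNReal.ofReal_one] at this
      calc ρ {(0:ℝ)} + ρ (Set.Ioc 0 1) ≤ ρ {(0:ℝ)} + 1 := by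
            exact add_le_add_right this _
        _ ≤ 0 + 1 := by
            apply add_le_add_left
            exact le_of_eq h0
        _ = 1 := by simp
    calc ∫⁻ t in Set.Ioc (0:ℝ) 1, ρ {a : ℝ | t < φ a}
        ≤ ∫⁻ _ in Set.Ioc (0:ℝ) 1, 1 ∂(volume) := by
          apply setLIntegral_mono' measurableSet_Ioc
          intro t _
          exact (measure_mono (Set.subset_univ _)).trans hρu
      _ = volume (Set.Ioc (0:ℝ) 1) := setLIntegral_one _
      _ = 1 := by rw [Real.volume_Ioc]; simp
  have h2 : ∫⁻ t in Set.Ioi (1:ℝ), ρ {a : ℝ | t < φ a} ≤ ENNReal.ofReal (τ/(ζ-τ)) := by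
    have hlt : -(ζ/τ) < -1 := by
      rw [neg_lt_neg_iff, lt_div_iff₀ hτ, one_mul]; exact hτζ
    have hint : IntegrableOn (fun t : ℝ => t ^ (-(ζ/τ))) (Set.Ioi 1) :=
      integrableOn_Ioi_rpow_of_lt hlt one_pos
    calc ∫⁻ t in Set.Ioi (1:ℝ), ρ {a : ℝ | t < φ a}
        ≤ ∫⁻ t in Set.Ioi (1:ℝ), ENNReal.ofReal (t ^ (-(ζ/τ))) := by
          apply setLIntegral_mono' measurableSet_Ioi
          intro t ht
          have ht1 : (1:ℝ) < t := ht
          have := hbd t (lt_trans one_pos ht1)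
          refine this.trans (ENNReal.ofReal_le_ofReal ?_)
          rw [min_eq_right (Real.rpow_le_one_of_one_le_of_nonpos ht1.le
            (neg_nonpos.2 (inv_nonneg.2 hτ.le))),
            ← Real.rpow_mul (le_of_lt (lt_trans one_pos ht1))]
          apply le_of_eq
          congr 1
          ring
      _ = ENNReal.ofReal (∫ t in Set.Ioi (1:ℝ), t ^ (-(ζ/τ))) := by
          rw [ofReal_integral_eq_lintegral_ofReal hint]
          filter_upwards [self_mem_ae_restrict measurableSet_Ioi] with t ht
          exact Real.rpow_nonneg (le_trans zero_le_one (le_of_lt ht)) _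
      _ = ENNReal.ofReal (τ/(ζ-τ)) := by
          rw [integral_Ioi_rpow_of_lt hlt one_pos]
          congr 1
          rw [Real.one_rpow]
          have hne : -(ζ/τ) + 1 ≠ 0 := by
            intro h
            have : ζ / τ = 1 := by linarith
            rw [div_eq_one_iff_eq hτ.ne'] at this
            exact (ne_of_gt hτζ) this
          rw [div_eq_div_iff hne (sub_ne_zero.2 (ne_of_gt hτζ))]
          field_simp
          ring
  calc _ ≤ 1 + ENNReal.ofReal (τ/(ζ-τ)) := add_le_add h1 h2
    _ = ENNReal.ofReal (ζ/(ζ-τ)) := by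
        rw [← ENNReal.ofReal_one,
          ← ENNReal.ofReal_add zero_le_one (div_nonneg hτ.le (by linarith))]
        congr 1
        have hne : ζ - τ ≠ 0 := sub_ne_zero.2 (ne_of_gt hτζ)
        field_simp
        ring

noncomputable def trpow (e : ℝ) : ℝ → ℝ := fun l => if 0 < l then l ^ e else 0

lemma trpow_meas (e : ℝ) : Measurable (trpow e) := by
  have : trpow e = fun l => if 0 < l then Real.exp (Real.log l * e) else 0 := by
    funext l
    unfold trpow
    by_cases hl : 0 < l
    · simp only [if_pos hl, Real.rpow_def_of_pos hl]
    · simp only [if_neg hl]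
  rw [this]
  exact Measurable.ite measurableSet_Ioi ((Real.measurable_log.mul_const _).exp)
    measurable_const

lemma trpow_nonneg (e l : ℝ) : 0 ≤ trpow e l := by
  unfold trpow
  by_cases hl : 0 < l
  · simp only [if_pos hl]; exact Real.rpow_nonneg hl.le _
  · simp only [if_neg hl]; exact le_rfl

lemma trpow_of_pos {l : ℝ} (hl : 0 < l) (e : ℝ) : trpow e l = l ^ e := if_pos hl

lemma aux_cheb (ρ : Measure ℝ) [IsFiniteMeasure ρ] (τ : ℝ) (hτ : 0 < τ)
    (hae : ∀ᵐ l ∂ρ, l ∈ Set.Ioc (0:ℝ) 1) (Q : ℝ → ℝ)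
    (hIS : Integrable (fun l => l ^ 2 * Q l ^ 2) ρ)
    (hID : Integrable (fun l => l * Q l ^ 2) ρ)
    (hI1 : Integrable (fun l => trpow (1-τ) l * Q l ^ 2) ρ)
    (hI2 : Integrable (fun l => trpow (2-τ) l * Q l ^ 2) ρ) :
    (∫ l, l * Q l ^ 2 ∂ρ) * (∫ l, trpow (2-τ) l * Q l ^ 2 ∂ρ)
      ≤ (∫ l, l ^ 2 * Q l ^ 2 ∂ρ) * (∫ l, trpow (1-τ) l * Q l ^ 2 ∂ρ) := by
  set f1 : ℝ → ℝ := fun l => l ^ 2 * Q l ^ 2 with hf1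
  set f2 : ℝ → ℝ := fun l => trpow (1-τ) l * Q l ^ 2 with hf2
  set f3 : ℝ → ℝ := fun l => trpow (2-τ) l * Q l ^ 2 with hf3
  set f4 : ℝ → ℝ := fun l => l * Q l ^ 2 with hf4
  have hbad : ρ ((Set.Ioc (0:ℝ) 1)ᶜ) = 0 := by
    have := ae_iff.1 hae
    exact this
  have h1 : ∀ᵐ z ∂(ρ.prod ρ), z.1 ∈ Set.Ioc (0:ℝ) 1 ∧ z.2 ∈ Set.Ioc (0:ℝ) 1 := by
    rw [ae_iff]
    have hsub : {z : ℝ × ℝ | ¬(z.1 ∈ Set.Ioc (0:ℝ) 1 ∧ z.2 ∈ Set.Ioc (0:ℝ) 1)} ⊆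
        ((Set.Ioc (0:ℝ) 1)ᶜ ×ˢ (Set.univ : Set ℝ)) ∪
          ((Set.univ : Set ℝ) ×ˢ (Set.Ioc (0:ℝ) 1)ᶜ) := by
      intro z hz
      simp only [mem_setOf_eq, not_and_or] at hz
      rcases hz with h | h
      · exact Or.inl ⟨h, trivial⟩
      · exact Or.inr ⟨trivial, h⟩
    refine le_antisymm (le_trans (measure_mono hsub) ?_) zero_le
    refine le_trans (measure_union_le _ _) ?_
    rw [Measure.prod_prod, Measure.prod_prod, hbad, zero_mul, mul_zero, add_zero]
  have hptwise : ∀ᵐ z ∂(ρ.prod ρ),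
      0 ≤ f1 z.1 * f2 z.2 + f2 z.1 * f1 z.2 - (f3 z.1 * f4 z.2 + f4 z.1 * f3 z.2) := by
    filter_upwards [h1] with z hz
    obtain ⟨⟨hx0, hx1⟩, ⟨hy0, hy1⟩⟩ := hz
    set x := z.1
    set y := z.2
    have hx2 : trpow (1-τ) x = x * x ^ (-τ:ℝ) := by
      rw [trpow_of_pos hx0, show (1:ℝ)-τ = 1+(-τ) by ring, Real.rpow_add hx0,
        Real.rpow_one]
    have hx3 : trpow (2-τ) x = x ^ 2 * x ^ (-τ:ℝ) := by
      rw [trpow_of_pos hx0, show (2:ℝ)-τ = 2+(-τ) by ring, Real.rpow_add hx0,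
        show ((2:ℝ)) = ((2:ℕ):ℝ) by norm_num, Real.rpow_natCast]
    have hy2 : trpow (1-τ) y = y * y ^ (-τ:ℝ) := by
      rw [trpow_of_pos hy0, show (1:ℝ)-τ = 1+(-τ) by ring, Real.rpow_add hy0,
        Real.rpow_one]
    have hy3 : trpow (2-τ) y = y ^ 2 * y ^ (-τ:ℝ) := by
      rw [trpow_of_pos hy0, show (2:ℝ)-τ = 2+(-τ) by ring, Real.rpow_add hy0,
        show ((2:ℝ)) = ((2:ℕ):ℝ) by norm_num, Real.rpow_natCast]
    have hid : f1 x * f2 y + f2 x * f1 y - (f3 x * f4 y + f4 x * f3 y)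
        = ((x - y) * (y ^ (-τ:ℝ) - x ^ (-τ:ℝ))) * ((x * Q x ^ 2) * (y * Q y ^ 2)) := by
      rw [hf1, hf2, hf3, hf4]
      simp only []
      rw [hx2, hx3, hy2, hy3]
      ring
    rw [hid]
    apply mul_nonneg
    · rcases le_total x y with h | h
      · have hpow : y ^ (-τ:ℝ) ≤ x ^ (-τ:ℝ) :=
          Real.rpow_le_rpow_of_nonpos hx0 h (neg_nonpos.2 hτ.le)
        nlinarith [mul_nonneg (sub_nonneg.2 h) (sub_nonneg.2 hpow)]
      · have hpow : x ^ (-τ:ℝ) ≤ y ^ (-τ:ℝ) :=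
          Real.rpow_le_rpow_of_nonpos hy0 h (neg_nonpos.2 hτ.le)
        apply mul_nonneg (by linarith) (by linarith)
    · positivity
  have hInt12 : Integrable (fun z : ℝ × ℝ => f1 z.1 * f2 z.2) (ρ.prod ρ) :=
    hIS.mul_prod hI1
  have hInt21 : Integrable (fun z : ℝ × ℝ => f2 z.1 * f1 z.2) (ρ.prod ρ) :=
    hI1.mul_prod hIS
  have hInt34 : Integrable (fun z : ℝ × ℝ => f3 z.1 * f4 z.2) (ρ.prod ρ) :=
    hI2.mul_prod hID
  have hInt43 : Integrable (fun z : ℝ × ℝ => f4 z.1 * f3 z.2) (ρ.prod ρ) :=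
    hID.mul_prod hI2
  have key : 0 ≤ ∫ z, (f1 z.1 * f2 z.2 + f2 z.1 * f1 z.2
      - (f3 z.1 * f4 z.2 + f4 z.1 * f3 z.2)) ∂(ρ.prod ρ) :=
    integral_nonneg_of_ae hptwise
  have hIa : Integrable (fun z : ℝ × ℝ => f1 z.1 * f2 z.2 + f2 z.1 * f1 z.2) (ρ.prod ρ) :=
    hInt12.add hInt21
  have hIb : Integrable (fun z : ℝ × ℝ => f3 z.1 * f4 z.2 + f4 z.1 * f3 z.2) (ρ.prod ρ) :=
    hInt34.add hInt43
  rw [integral_sub hIa hIb, integral_add hInt12 hInt21,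
    integral_add hInt34 hInt43, integral_prod_mul f1 f2, integral_prod_mul f2 f1,
    integral_prod_mul f3 f4, integral_prod_mul f4 f3, sub_nonneg] at key
  nlinarith [key]

set_option maxHeartbeats 2000000 in
/-- Steepest Descent under the power-law spectral condition `ρ((0,λ]) ≤ λ^ζ`:
for every `-ζ < s < 0`, the SD losses obey
`L_n ≤ (L_0^{1/s} + (1/|s|)(ζ/(2(s+ζ)))^{1/s} n)^s`. -/
theorem steepest_descent_power_law_upper_bound
    (ζ : ℝ) (hζ : 0 < ζ)
    (ρ : Measure ℝ) [IsFiniteMeasure ρ]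
    (hsupp : ρ (Set.Icc (0:ℝ) 1)ᶜ = 0)
    (h0 : ρ {(0:ℝ)} = 0)
    (hpow : ∀ l ∈ Set.Icc (0:ℝ) 1, (ρ (Set.Ioc 0 l)).toReal ≤ l ^ ζ)
    (q : ℕ → ℝ → ℝ) (A : ℕ → ℝ)
    (hq0 : ∀ l, q 0 l = 1)
    (hA : ∀ n, A n = (∫ l, l * (q n l) ^ 2 ∂ρ) / ∫ l, l ^ 2 * (q n l) ^ 2 ∂ρ)
    (hqrec : ∀ n l, q (n + 1) l = (1 - A n * l) * q n l)
    (hpos : ∀ n, 0 < ∫ l, l ^ 2 * (q n l) ^ 2 ∂ρ) :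
    ∀ s : ℝ, -ζ < s → s < 0 → ∀ n : ℕ,
      (1/2) * ∫ l, (q n l) ^ 2 ∂ρ ≤
        (((1/2) * ∫ l, (q 0 l) ^ 2 ∂ρ) ^ (1/s) +
            (1/|s|) * (ζ / (2 * (s + ζ))) ^ (1/s) * n) ^ s := by
  intro s hsl hsr
  set τ : ℝ := -s with hτs
  have hτ : 0 < τ := neg_pos.2 hsr
  have hτζ : τ < ζ := by rw [hτs]; linarith
  have hsτ : s = -τ := by rw [hτs, neg_neg]
  set Mb : ℝ := ζ / (ζ - τ) with hMbdef
  have hMb_pos : 0 < Mb := div_pos hζ (by linarith)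
  -- a.e. support
  have hae : ∀ᵐ l ∂ρ, l ∈ Set.Ioc (0:ℝ) 1 := by
    rw [ae_iff]
    have hsub : {l : ℝ | ¬ l ∈ Set.Ioc (0:ℝ) 1} ⊆ (Set.Icc (0:ℝ) 1)ᶜ ∪ {(0:ℝ)} := by
      intro l hl
      simp only [mem_setOf_eq, Set.mem_Ioc, not_and_or, not_lt, not_le] at hl
      by_cases hIcc : l ∈ Set.Icc (0:ℝ) 1
      · rcases hl with h | h
        · right; simp [le_antisymm h hIcc.1]
        · exact absurd hIcc.2 (not_le.2 h)
      · exact Or.inl hIcc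
    refine le_antisymm (le_trans (measure_mono hsub) ?_) zero_le
    refine le_trans (measure_union_le _ _) ?_
    rw [hsupp, h0, add_zero]
  -- product formula and bounds
  have hq_eq : ∀ n l, q n l = ∏ k ∈ Finset.range n, (1 - A k * l) := by
    intro n
    induction n with
    | zero => intro l; simp [hq0]
    | succ n ih =>
      intro l
      rw [hqrec, ih, Finset.prod_range_succ]
      ring
  have hqm : ∀ n, Measurable (q n) := by
    intro n
    have : q n = fun l => ∏ k ∈ Finset.range n, (1 - A k * l) := funext (hq_eq n)
    rw [this]
    exact Finset.measurable_prod _ fun k _ =>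
      measurable_const.sub (measurable_id.const_mul (A k))
  have hbound : ∀ n, ∃ c : ℝ, 0 ≤ c ∧ ∀ l ∈ Set.Ioc (0:ℝ) 1, q n l ^ 2 ≤ c := by
    intro n
    refine ⟨(∏ k ∈ Finset.range n, (1 + |A k|)) ^ 2, by positivity, ?_⟩
    intro l hl
    have habs : |q n l| ≤ ∏ k ∈ Finset.range n, (1 + |A k|) := by
      rw [hq_eq n l, Finset.abs_prod]
      apply Finset.prod_le_prod (fun k _ => abs_nonneg _)
      intro k _
      calc |1 - A k * l| ≤ |(1:ℝ)| + |A k * l| := abs_sub _ _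
        _ = 1 + |A k| * |l| := by rw [abs_one, abs_mul]
        _ ≤ 1 + |A k| * 1 := by
            apply add_le_add_right
            apply mul_le_mul_of_nonneg_left _ (abs_nonneg _)
            rw [abs_of_pos hl.1]; exact hl.2
        _ = 1 + |A k| := by ring
    calc q n l ^ 2 = |q n l| ^ 2 := (sq_abs _).symm
      _ ≤ (∏ k ∈ Finset.range n, (1 + |A k|)) ^ 2 :=
          pow_le_pow_left₀ (abs_nonneg _) habs 2
  -- integrability of the negative moment weight
  have hφae : (Set.Ioc (0:ℝ) 1).indicator (fun l => l ^ (-τ)) =ᵐ[ρ] trpow (-τ) := by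
    filter_upwards [hae] with l hl
    rw [indicator_of_mem hl, trpow_of_pos hl.1]
  have hφmeas : Measurable ((Set.Ioc (0:ℝ) 1).indicator (fun l : ℝ => l ^ (-τ))) := by
    have : (Set.Ioc (0:ℝ) 1).indicator (fun l : ℝ => l ^ (-τ))
        = (Set.Ioc (0:ℝ) 1).indicator (trpow (-τ)) := by
      apply indicator_congr
      intro l hl
      rw [trpow_of_pos hl.1]
    rw [this]
    exact (trpow_meas _).indicator measurableSet_Ioc
  have hφnn : ∀ l, 0 ≤ (Set.Ioc (0:ℝ) 1).indicator (fun l : ℝ => l ^ (-τ)) l := by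
    intro l
    by_cases hl : l ∈ Set.Ioc (0:ℝ) 1
    · rw [indicator_of_mem hl]; exact Real.rpow_nonneg hl.1.le _
    · rw [indicator_of_notMem hl]
  have hJ := aux_negmoment ζ τ hζ hτ hτζ ρ hsupp h0 hpow
  have hφint : Integrable ((Set.Ioc (0:ℝ) 1).indicator (fun l : ℝ => l ^ (-τ))) ρ := by
    refine ⟨hφmeas.aestronglyMeasurable, ?_⟩
    rw [hasFiniteIntegral_iff_ofReal (ae_of_all _ hφnn)]
    exact lt_of_le_of_lt hJ ENNReal.ofReal_lt_top
  have htrint : Integrable (trpow (-τ)) ρ := hφint.congr hφae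
  have hM0' : ∫ l, trpow (-τ) l ∂ρ ≤ Mb := by
    rw [← integral_congr_ae hφae]
    rw [integral_eq_lintegral_of_nonneg_ae (ae_of_all _ hφnn) hφmeas.aestronglyMeasurable]
    exact ENNReal.toReal_le_of_le_ofReal hMb_pos.le hJ
  -- trpow comparisons on (0,1]
  have htr_le : ∀ e : ℝ, -τ ≤ e → ∀ l ∈ Set.Ioc (0:ℝ) 1, trpow e l ≤ trpow (-τ) l := by
    intro e he l hl
    rw [trpow_of_pos hl.1, trpow_of_pos hl.1]
    exact Real.rpow_le_rpow_of_exponent_ge hl.1 hl.2 he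
  have h1le : ∀ l ∈ Set.Ioc (0:ℝ) 1, (1:ℝ) ≤ trpow (-τ) l := by
    intro l hl
    have := htr_le 0 (by linarith) l hl
    rwa [trpow_of_pos hl.1, Real.rpow_zero] at this
  -- integrability of all integrands
  have hIw : ∀ (n : ℕ) (e : ℝ), -τ ≤ e → Integrable (fun l => trpow e l * q n l ^ 2) ρ := by
    intro n e he
    obtain ⟨c, hc0, hc⟩ := hbound n
    apply Integrable.mono' (htrint.const_mul c)
      (((trpow_meas e).mul ((hqm n).pow_const 2)).aestronglyMeasurable)
    filter_upwards [hae] with l hl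
    change ‖trpow e l * q n l ^ 2‖ ≤ c * trpow (-τ) l
    rw [Real.norm_eq_abs, abs_of_nonneg (mul_nonneg (trpow_nonneg _ _) (sq_nonneg _))]
    calc trpow e l * q n l ^ 2 ≤ trpow (-τ) l * c := by
          apply mul_le_mul (htr_le e he l hl) (hc l hl) (sq_nonneg _) (trpow_nonneg _ _)
      _ = c * trpow (-τ) l := mul_comm _ _
  have hIm : ∀ n, Integrable (fun l => q n l ^ 2) ρ := by
    intro n
    apply (hIw n 0 (by linarith)).congr
    filter_upwards [hae] with l hl
    rw [trpow_of_pos hl.1, Real.rpow_zero, one_mul]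
  have hID : ∀ n, Integrable (fun l => l * q n l ^ 2) ρ := by
    intro n
    apply (hIw n 1 (by linarith)).congr
    filter_upwards [hae] with l hl
    rw [trpow_of_pos hl.1, Real.rpow_one]
  have hIS : ∀ n, Integrable (fun l => l ^ 2 * q n l ^ 2) ρ := by
    intro n
    apply (hIw n 2 (by linarith)).congr
    filter_upwards [hae] with l hl
    rw [trpow_of_pos hl.1, show ((2:ℝ)) = ((2:ℕ):ℝ) by norm_num, Real.rpow_natCast]
  -- abbreviations
  set m : ℕ → ℝ := fun n => ∫ l, q n l ^ 2 ∂ρ with hmdef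
  set D : ℕ → ℝ := fun n => ∫ l, l * q n l ^ 2 ∂ρ with hDdef
  set S : ℕ → ℝ := fun n => ∫ l, l ^ 2 * q n l ^ 2 ∂ρ with hSdef
  set MM : ℕ → ℝ := fun n => ∫ l, trpow (-τ) l * q n l ^ 2 ∂ρ with hMMdef
  set T1 : ℕ → ℝ := fun n => ∫ l, trpow (1 - τ) l * q n l ^ 2 ∂ρ with hT1def
  set T2 : ℕ → ℝ := fun n => ∫ l, trpow (2 - τ) l * q n l ^ 2 ∂ρ with hT2def
  have hA' : ∀ n, A n = D n / S n := fun n => hA n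
  have hS : ∀ n, 0 < S n := fun n => hpos n
  have hSD : ∀ n, S n ≤ D n := by
    intro n
    apply integral_mono_ae (hIS n) (hID n)
    filter_upwards [hae] with l hl
    apply mul_le_mul_of_nonneg_right _ (sq_nonneg _)
    nlinarith [hl.1, hl.2]
  have hDm : ∀ n, D n ≤ m n := by
    intro n
    apply integral_mono_ae (hID n) (hIm n)
    filter_upwards [hae] with l hl
    nlinarith [sq_nonneg (q n l), hl.1, hl.2]
  have hDpos : ∀ n, 0 < D n := fun n => lt_of_lt_of_le (hS n) (hSD n)
  have hmpos : ∀ n, 0 < m n := fun n => lt_of_lt_of_le (hDpos n) (hDm n)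
  have hApos : ∀ n, 0 < A n := fun n => by
    rw [hA']; exact div_pos (hDpos n) (hS n)
  have hT1nn : ∀ n, 0 ≤ T1 n := fun n =>
    integral_nonneg fun l => mul_nonneg (trpow_nonneg _ _) (sq_nonneg _)
  have hmMM : ∀ n, m n ≤ MM n := by
    intro n
    apply integral_mono_ae (hIm n) (hIw n (-τ) le_rfl)
    filter_upwards [hae] with l hl
    nlinarith [h1le l hl, sq_nonneg (q n l)]
  have hMM0 : MM 0 ≤ Mb := by
    refine le_trans (le_of_eq ?_) hM0'
    apply integral_congr_ae
    apply ae_of_all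
    intro l
    simp [hq0 l]
  -- MM is nonincreasing
  have hMMrec : ∀ n, MM (n + 1) ≤ MM n := by
    intro n
    have hcheb := aux_cheb ρ τ hτ hae (q n) (hIS n) (hID n)
      (hIw n (1 - τ) (by linarith)) (hIw n (2 - τ) (by linarith))
    have hexp : MM (n + 1) = MM n - (2 * A n) * T1 n + (A n) ^ 2 * T2 n := by
      have hfun : (fun l => trpow (-τ) l * q (n+1) l ^ 2) =ᵐ[ρ]
          (fun l => trpow (-τ) l * q n l ^ 2 - (2 * A n) * (trpow (1 - τ) l * q n l ^ 2)
            + (A n) ^ 2 * (trpow (2 - τ) l * q n l ^ 2)) := by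
        filter_upwards [hae] with l hl
        have e1 : trpow (1 - τ) l = l * trpow (-τ) l := by
          rw [trpow_of_pos hl.1, trpow_of_pos hl.1, show (1:ℝ) - τ = 1 + (-τ) by ring,
            Real.rpow_add hl.1, Real.rpow_one]
        have e2 : trpow (2 - τ) l = l ^ 2 * trpow (-τ) l := by
          rw [trpow_of_pos hl.1, trpow_of_pos hl.1, show (2:ℝ) - τ = 2 + (-τ) by ring,
            Real.rpow_add hl.1, show ((2:ℝ)) = ((2:ℕ):ℝ) by norm_num, Real.rpow_natCast]
        rw [hqrec n l, e1, e2]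
        ring
      calc MM (n+1) = ∫ l, (trpow (-τ) l * q n l ^ 2
            - (2 * A n) * (trpow (1 - τ) l * q n l ^ 2)
            + (A n) ^ 2 * (trpow (2 - τ) l * q n l ^ 2)) ∂ρ := integral_congr_ae hfun
        _ = MM n - (2 * A n) * T1 n + (A n) ^ 2 * T2 n := by
            have I0 := hIw n (-τ) le_rfl
            have I1c := (hIw n (1 - τ) (by linarith)).const_mul (2 * A n)
            have I2c := (hIw n (2 - τ) (by linarith)).const_mul ((A n) ^ 2)
            have Ia : Integrable (fun l => trpow (-τ) l * q n l ^ 2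
                - 2 * A n * (trpow (1 - τ) l * q n l ^ 2)) ρ := I0.sub I1c
            rw [integral_add Ia I2c, integral_sub I0 I1c,
              integral_const_mul, integral_const_mul]
    have hAT2 : A n * T2 n ≤ T1 n := by
      rw [hA', div_mul_eq_mul_div, div_le_iff₀ (hS n)]
      linarith [hcheb]
    have h2 : (A n) ^ 2 * T2 n ≤ A n * T1 n := by
      have := mul_le_mul_of_nonneg_left hAT2 (hApos n).le
      calc (A n) ^ 2 * T2 n = A n * (A n * T2 n) := by ring
        _ ≤ A n * T1 n := this
    have h3 : 0 ≤ A n * T1 n := mul_nonneg (hApos n).le (hT1nn n)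
    linarith [hexp, h2, h3]
  have hMMle : ∀ n, MM n ≤ Mb := by
    intro n
    induction n with
    | zero => exact hMM0
    | succ n ih => exact le_trans (hMMrec n) ih
  -- loss recursion
  have hrec : ∀ n, m (n + 1) ≤ m n - D n := by
    intro n
    have hfun : (fun l => q (n+1) l ^ 2) = (fun l => q n l ^ 2
        - 2 * A n * (l * q n l ^ 2) + (A n) ^ 2 * (l ^ 2 * q n l ^ 2)) := by
      funext l; rw [hqrec n l]; ring
    have hexp : m (n + 1) = m n - 2 * A n * D n + (A n) ^ 2 * S n := by
      have I0 := hIm n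
      have I1c := (hID n).const_mul (2 * A n)
      have I2c := (hIS n).const_mul ((A n) ^ 2)
      have Ia : Integrable (fun l => q n l ^ 2
          - 2 * A n * (l * q n l ^ 2)) ρ := I0.sub I1c
      calc m (n + 1) = ∫ l, (q n l ^ 2 - 2 * A n * (l * q n l ^ 2)
            + (A n) ^ 2 * (l ^ 2 * q n l ^ 2)) ∂ρ := by rw [hmdef]; simp only [hfun]
        _ = m n - 2 * A n * D n + (A n) ^ 2 * S n := by
            rw [integral_add Ia I2c, integral_sub I0 I1c,
              integral_const_mul, integral_const_mul]
    have h2 : m (n + 1) = m n - D n ^ 2 / S n := by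
      rw [hexp, hA' n]
      have hSne := (hS n).ne'
      field_simp
      ring
    have hDS : D n ≤ D n ^ 2 / S n := by
      rw [le_div_iff₀ (hS n)]
      nlinarith [hSD n, hDpos n]
    linarith [h2, hDS]
  -- Hoelder-type lower bound on D
  have hDlb : ∀ n, m n * (m n / Mb) ^ ((1:ℝ)/τ) ≤ D n := by
    intro n
    set a : ℝ := 1/(1+τ) with hadef
    set b : ℝ := τ/(1+τ) with hbdef
    have h1τ : (0:ℝ) < 1 + τ := by linarith
    have ha : 0 < a := by rw [hadef]; positivity
    have hb : 0 < b := by rw [hbdef]; positivity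
    have hab : a + b = 1 := by rw [hadef, hbdef]; field_simp
    set t : ℝ := D n / Mb with htdef
    have ht : 0 < t := div_pos (hDpos n) hMb_pos
    have hpt : ∀ᵐ l ∂ρ, q n l ^ 2 ≤ a * (t ^ b * (trpow (-τ) l * q n l ^ 2))
        + b * (t ^ (-a) * (l * q n l ^ 2)) := by
      filter_upwards [hae] with l hl
      rw [trpow_of_pos hl.1]
      have hp1 : (0:ℝ) ≤ t ^ b * (l ^ (-τ) * q n l ^ 2) := by
        have := Real.rpow_nonneg hl.1.le (-τ)
        positivity
      have hp2 : (0:ℝ) ≤ t ^ (-a) * (l * q n l ^ 2) := by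
        have := hl.1.le
        positivity
      have key := Real.geom_mean_le_arith_mean2_weighted ha.le hb.le hp1 hp2 hab
      have hLHS : (t ^ b * (l ^ (-τ) * q n l ^ 2)) ^ a * (t ^ (-a) * (l * q n l ^ 2)) ^ b
          = q n l ^ 2 := by
        have e1 : (t ^ b) ^ a * (t ^ (-a)) ^ b = 1 := by
          rw [← Real.rpow_mul ht.le, ← Real.rpow_mul ht.le, ← Real.rpow_add ht,
            show b * a + -a * b = 0 by ring, Real.rpow_zero]
        have e2 : ((l:ℝ) ^ (-τ)) ^ a * l ^ b = 1 := by
          rw [← Real.rpow_mul hl.1.le, ← Real.rpow_add hl.1,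
            show -τ * a + b = 0 by rw [hadef, hbdef]; field_simp; ring, Real.rpow_zero]
        have e3 : (q n l ^ 2) ^ a * (q n l ^ 2) ^ b = q n l ^ 2 := by
          rw [← Real.rpow_add' (sq_nonneg _) (by rw [hab]; norm_num), hab, Real.rpow_one]
        calc (t ^ b * (l ^ (-τ) * q n l ^ 2)) ^ a * (t ^ (-a) * (l * q n l ^ 2)) ^ b
            = ((t ^ b) ^ a * ((l ^ (-τ)) ^ a * (q n l ^ 2) ^ a))
              * ((t ^ (-a)) ^ b * (l ^ b * (q n l ^ 2) ^ b)) := by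
              rw [Real.mul_rpow (Real.rpow_nonneg ht.le _)
                  (mul_nonneg (Real.rpow_nonneg hl.1.le _) (sq_nonneg _)),
                Real.mul_rpow (Real.rpow_nonneg hl.1.le _) (sq_nonneg _),
                Real.mul_rpow (Real.rpow_nonneg ht.le _)
                  (mul_nonneg hl.1.le (sq_nonneg _)),
                Real.mul_rpow hl.1.le (sq_nonneg _)]
          _ = ((t ^ b) ^ a * (t ^ (-a)) ^ b) * (((l ^ (-τ)) ^ a * l ^ b)
              * ((q n l ^ 2) ^ a * (q n l ^ 2) ^ b)) := by ring
          _ = q n l ^ 2 := by rw [e1, e2, e3, one_mul, one_mul]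
      rw [hLHS] at key
      exact key
    have hR : Integrable (fun l => a * (t ^ b * (trpow (-τ) l * q n l ^ 2))
        + b * (t ^ (-a) * (l * q n l ^ 2))) ρ :=
      (((hIw n (-τ) le_rfl).const_mul _).const_mul _).add
        (((hID n).const_mul _).const_mul _)
    have hint0 := integral_mono_ae (hIm n) hR hpt
    have hint : m n ≤ a * t ^ b * MM n + b * t ^ (-a) * D n := by
      rw [integral_add (((hIw n (-τ) le_rfl).const_mul _).const_mul _)
          (((hID n).const_mul _).const_mul _), integral_const_mul, integral_const_mul,
        integral_const_mul, integral_const_mul] at hint0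
      calc m n ≤ _ := hint0
        _ = a * t ^ b * MM n + b * t ^ (-a) * D n := by ring
    have hMbbd : a * t ^ b * MM n ≤ a * t ^ b * Mb := by
      apply mul_le_mul_of_nonneg_left (hMMle n)
      positivity
    have hval : a * t ^ b * Mb + b * t ^ (-a) * D n = Mb ^ a * D n ^ b := by
      have hMbb : Mb ^ b ≠ 0 := (Real.rpow_pos_of_pos hMb_pos _).ne'
      have hDa : D n ^ a ≠ 0 := (Real.rpow_pos_of_pos (hDpos n) _).ne'
      have h1 : Mb ^ a * Mb ^ b = Mb := by rw [← Real.rpow_add hMb_pos, hab, Real.rpow_one]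
      have h2 : D n ^ a * D n ^ b = D n := by
        rw [← Real.rpow_add (hDpos n), hab, Real.rpow_one]
      have ht1 : t ^ b = D n ^ b / Mb ^ b := Real.div_rpow (hDpos n).le hMb_pos.le b
      have ht2 : t ^ (-a) = Mb ^ a / D n ^ a := by
        rw [Real.rpow_neg ht.le, htdef, Real.div_rpow (hDpos n).le hMb_pos.le,
          inv_div]
      rw [ht1, ht2]
      have hMM2 : Mb / Mb ^ b = Mb ^ a := by rw [div_eq_iff hMbb]; exact h1.symm
      have hDD : D n / D n ^ a = D n ^ b := by
        rw [div_eq_iff hDa, mul_comm]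
        exact h2.symm
      calc a * (D n ^ b / Mb ^ b) * Mb + b * (Mb ^ a / D n ^ a) * D n
          = a * D n ^ b * (Mb / Mb ^ b) + b * Mb ^ a * (D n / D n ^ a) := by ring
        _ = a * D n ^ b * Mb ^ a + b * Mb ^ a * D n ^ b := by rw [hMM2, hDD]
        _ = Mb ^ a * D n ^ b := by linear_combination (D n ^ b * Mb ^ a) * hab
    have hfinal : m n ≤ Mb ^ a * D n ^ b := by linarith [hint, hMbbd, hval]
    have hmb := Real.rpow_le_rpow (hmpos n).le hfinal (le_of_lt (by positivity : (0:ℝ) < 1/b))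
    have hRHS : (Mb ^ a * D n ^ b) ^ ((1:ℝ)/b) = Mb ^ ((1:ℝ)/τ) * D n := by
      rw [Real.mul_rpow (Real.rpow_nonneg hMb_pos.le _) (Real.rpow_nonneg (hDpos n).le _),
        ← Real.rpow_mul hMb_pos.le, ← Real.rpow_mul (hDpos n).le,
        show a * (1/b) = 1/τ by rw [hadef, hbdef]; field_simp,
        show b * (1/b) = 1 by field_simp [hb.ne'], Real.rpow_one]
    have hLHS2 : m n ^ ((1:ℝ)/b) = m n * m n ^ ((1:ℝ)/τ) := by
      rw [show (1:ℝ)/b = 1 + 1/τ by rw [hbdef]; field_simp; ring,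
        Real.rpow_add (hmpos n), Real.rpow_one]
    rw [hRHS, hLHS2] at hmb
    rw [Real.div_rpow (hmpos n).le hMb_pos.le, ← mul_div_assoc,
      div_le_iff₀ (Real.rpow_pos_of_pos hMb_pos _)]
    calc m n * m n ^ ((1:ℝ)/τ) ≤ Mb ^ ((1:ℝ)/τ) * D n := hmb
      _ = D n * Mb ^ ((1:ℝ)/τ) := mul_comm _ _
  -- one-step inequality for m^(-1/τ)
  have hstep : ∀ n, m n ^ (-(1/τ):ℝ) + (1/τ) * Mb ^ (-(1/τ):ℝ) ≤ m (n+1) ^ (-(1/τ):ℝ) := by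
    intro n
    set u : ℝ := (m n / Mb) ^ ((1:ℝ)/τ) with hudef
    have hu0 : 0 < u := Real.rpow_pos_of_pos (div_pos (hmpos n) hMb_pos) _
    have hmu : m (n+1) ≤ m n * (1 - u) := by
      have := hDlb n
      have h2 := hrec n
      nlinarith
    have h1u : 0 < 1 - u := by
      have := hmpos (n+1)
      have hmn := hmpos n
      nlinarith
    have hstep1 : (m n * (1 - u)) ^ (-(1/τ):ℝ) ≤ m (n+1) ^ (-(1/τ):ℝ) :=
      Real.rpow_le_rpow_of_nonpos (hmpos (n+1)) hmu
        (by rw [neg_nonpos]; positivity)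
    have hsplit : (m n * (1 - u)) ^ (-(1/τ):ℝ)
        = m n ^ (-(1/τ):ℝ) * (1 - u) ^ (-(1/τ):ℝ) :=
      Real.mul_rpow (hmpos n).le h1u.le
    have hbern : 1 + u/τ ≤ (1 - u) ^ (-(1/τ):ℝ) := aux_bernoulli hτ hu0.le (by linarith)
    have hchain : m n ^ (-(1/τ):ℝ) * (1 + u/τ) ≤ (m n * (1 - u)) ^ (-(1/τ):ℝ) := by
      rw [hsplit]
      exact mul_le_mul_of_nonneg_left hbern (Real.rpow_nonneg (hmpos n).le _)
    have huval : m n ^ (-(1/τ):ℝ) * u = Mb ^ (-(1/τ):ℝ) := by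
      rw [hudef, Real.div_rpow (hmpos n).le hMb_pos.le,
        Real.rpow_neg (hmpos n).le, Real.rpow_neg hMb_pos.le]
      have hm1 : m n ^ ((1:ℝ)/τ) ≠ 0 := (Real.rpow_pos_of_pos (hmpos n) _).ne'
      have hM1 : Mb ^ ((1:ℝ)/τ) ≠ 0 := (Real.rpow_pos_of_pos hMb_pos _).ne'
      field_simp
    calc m n ^ (-(1/τ):ℝ) + (1/τ) * Mb ^ (-(1/τ):ℝ)
        = m n ^ (-(1/τ):ℝ) * (1 + u/τ) := by
          rw [← huval]; ring
      _ ≤ (m n * (1 - u)) ^ (-(1/τ):ℝ) := hchain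
      _ ≤ m (n+1) ^ (-(1/τ):ℝ) := hstep1
  -- iterate
  have hiter : ∀ n : ℕ, m 0 ^ (-(1/τ):ℝ) + n * ((1/τ) * Mb ^ (-(1/τ):ℝ))
      ≤ m n ^ (-(1/τ):ℝ) := by
    intro n
    induction n with
    | zero => simp
    | succ n ih =>
      have := hstep n
      push_cast
      have hexpand : m 0 ^ (-(1/τ):ℝ) + ((n:ℝ) + 1) * ((1/τ) * Mb ^ (-(1/τ):ℝ))
          = (m 0 ^ (-(1/τ):ℝ) + (n:ℝ) * ((1/τ) * Mb ^ (-(1/τ):ℝ)))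
            + (1/τ) * Mb ^ (-(1/τ):ℝ) := by ring
      rw [hexpand]
      linarith
  -- conclusion
  intro n
  have hBpos : 0 < m 0 ^ (-(1/τ):ℝ) + n * ((1/τ) * Mb ^ (-(1/τ):ℝ)) := by
    have h1 : 0 < m 0 ^ (-(1/τ):ℝ) := Real.rpow_pos_of_pos (hmpos 0) _
    have h2 : (0:ℝ) ≤ n * ((1/τ) * Mb ^ (-(1/τ):ℝ)) := by positivity
    linarith
  have hmain : m n ≤ (m 0 ^ (-(1/τ):ℝ) + n * ((1/τ) * Mb ^ (-(1/τ):ℝ))) ^ (-τ:ℝ) := by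
    have h1 : (m n ^ (-(1/τ):ℝ)) ^ (-τ:ℝ) = m n := by
      rw [← Real.rpow_mul (hmpos n).le,
        show (-(1/τ)) * (-τ) = 1 by field_simp, Real.rpow_one]
    rw [← h1]
    exact Real.rpow_le_rpow_of_nonpos hBpos (hiter n) (by linarith)
  -- rewrite the goal
  have habs : |s| = τ := by rw [hsτ, abs_neg, abs_of_pos hτ]
  have h1s : 1/s = -(1/τ) := by rw [hsτ]; field_simp
  have hzf : ζ / (2 * (s + ζ)) = Mb / 2 := by
    rw [hsτ, hMbdef]
    have : -τ + ζ = ζ - τ := by ring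
    rw [this]
    rw [div_div, mul_comm]
  rw [h1s, habs, hzf, hsτ]
  have e2 : ((1:ℝ)/2 * m 0) ^ (-(1/τ):ℝ) = m 0 ^ (-(1/τ):ℝ) * 2 ^ ((1:ℝ)/τ) := by
    rw [show (1:ℝ)/2 * m 0 = m 0 / 2 by ring, Real.div_rpow (hmpos 0).le (by norm_num),
      Real.rpow_neg (by norm_num : (0:ℝ) ≤ 2), div_inv_eq_mul]
  have e3 : (Mb/2) ^ (-(1/τ):ℝ) = Mb ^ (-(1/τ):ℝ) * 2 ^ ((1:ℝ)/τ) := by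
    rw [Real.div_rpow hMb_pos.le (by norm_num),
      Real.rpow_neg (by norm_num : (0:ℝ) ≤ 2), div_inv_eq_mul]
  rw [e2, e3]
  have ebase : m 0 ^ (-(1/τ):ℝ) * 2 ^ ((1:ℝ)/τ)
      + 1/τ * (Mb ^ (-(1/τ):ℝ) * 2 ^ ((1:ℝ)/τ)) * (n:ℝ)
      = 2 ^ ((1:ℝ)/τ) * (m 0 ^ (-(1/τ):ℝ) + (n:ℝ) * (1/τ * Mb ^ (-(1/τ):ℝ))) := by
    ring
  rw [ebase, Real.mul_rpow (Real.rpow_nonneg (by norm_num : (0:ℝ) ≤ 2) _) hBpos.le,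
    ← Real.rpow_mul (by norm_num : (0:ℝ) ≤ 2),
    show (1:ℝ)/τ * (-τ) = -1 by field_simp, Real.rpow_neg_one,
    show (2:ℝ)⁻¹ = 1/2 by norm_num]
  exact mul_le_mul_of_nonneg_left hmain (by norm_num)
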